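/- Let F : ℝ^d → ℝ^d be continuous and let W : ℝ^d → ℝ be a C¹-smooth proper function (all sublevel sets {x : W(x) ≤ c} are compact). Let Q ∈ ℝ be such that the set K = {x : W(x) ≤ Q} is nonempty and ∇W(x)·F(x) < 0 for every x with W(x) > Q. Then for every differentiable curve x : [0,∞) → ℝ^d satisfying x'(t) = F(x(t)) for all t ≥ 0, the distance dist(x(t), K) tends to 0 as t → ∞. -/

import Mathlib

open Set Metric

theorem stmt8 (d : ℕ) (F : EuclideanSpace ℝ (Fin d) → EuclideanSpace ℝ (Fin d))
    (hF : Continuous F) (W : EuclideanSpace ℝ (Fin d) → ℝ) (hW : ContDiff ℝ 1 W)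
    (hproper : ∀ c : ℝ, IsCompact {x | W x ≤ c}) (Q : ℝ)
    (hne : Set.Nonempty {x | W x ≤ Q})
    (hstrict : ∀ x, Q < W x → fderiv ℝ W x (F x) < 0)
    (x : ℝ → EuclideanSpace ℝ (Fin d))
    (hx : ∀ t : ℝ, 0 ≤ t → HasDerivAt x (F (x t)) t) :
    Filter.Tendsto (fun t => Metric.infDist (x t) {y | W y ≤ Q})
      Filter.atTop (nhds 0) := by
  have hWc : Continuous W := hW.continuous
  have hphi : Continuous (fun y => fderiv ℝ W y (F y)) :=
    (hW.continuous_fderiv one_ne_zero).clm_apply hF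
  set g : ℝ → ℝ := fun t => W (x t) with hgdef
  have hg : ∀ t, 0 ≤ t → HasDerivAt g (fderiv ℝ W (x t) (F (x t))) t := fun t ht =>
    ((hW.differentiable one_ne_zero (x t)).hasFDerivAt).comp_hasDerivAt t (hx t ht)
  have xcont : ContinuousOn x (Set.Ici 0) := fun t ht =>
    (hx t ht).continuousAt.continuousWithinAt
  have gcont : ContinuousOn g (Set.Ici 0) := hWc.comp_continuousOn xcont
  -- monotonicity helper
  have mono : ∀ a b : ℝ, 0 ≤ a → (∀ s ∈ Set.Ioo a b, Q < g s) →
      AntitoneOn g (Set.Icc a b) := by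
    intro a b ha hQ
    apply antitoneOn_of_deriv_nonpos (convex_Icc a b)
      (gcont.mono (fun s hs => le_trans ha hs.1))
    · intro s hs
      rw [interior_Icc] at hs
      exact ((hg s (le_trans ha hs.1.le)).differentiableAt).differentiableWithinAt
    · intro s hs
      rw [interior_Icc] at hs
      rw [(hg s (le_trans ha hs.1.le)).deriv]
      exact (hstrict (x s) (hQ s hs)).le
  -- trap lemma
  have trap : ∀ c, Q < c → ∀ t0, 0 ≤ t0 → g t0 ≤ c → ∀ t, t0 ≤ t → g t ≤ c := by
    intro c hc t0 ht0 h0 t1 ht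
    by_contra hcon
    push_neg at hcon
    have ht01 : t0 < t1 := lt_of_le_of_ne ht (by rintro rfl; exact absurd h0 (not_le.2 hcon))
    set S : Set ℝ := Set.Icc t0 t1 ∩ g ⁻¹' (Set.Iic c) with hSdef
    have hSne : S.Nonempty := ⟨t0, ⟨le_refl _, ht01.le⟩, h0⟩
    have hSbdd : BddAbove S := ⟨t1, fun s hs => hs.1.2⟩
    have hSclosed : IsClosed S :=
      (gcont.mono (fun s hs => le_trans ht0 hs.1)).preimage_isClosed_of_isClosed
        isClosed_Icc isClosed_Iic
    have hstar : sSup S ∈ S := hSclosed.csSup_mem hSne hSbdd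
    set τ := sSup S with hτ
    have hτ0 : 0 ≤ τ := le_trans ht0 hstar.1.1
    have hτ1 : τ < t1 := lt_of_le_of_ne hstar.1.2
      (by intro h; rw [h] at hstar; exact absurd hstar.2 (not_le.2 hcon))
    have habove : ∀ s ∈ Set.Ioo τ t1, Q < g s := by
      intro s hs
      by_contra hle
      push_neg at hle
      have hsc : g s ≤ c := le_trans hle hc.le
      have : s ≤ τ := le_csSup hSbdd ⟨⟨le_trans hstar.1.1 hs.1.le, hs.2.le⟩, hsc⟩
      exact absurd this (not_le.2 hs.1)
    have := mono τ t1 hτ0 habove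
      ⟨le_refl τ, hτ1.le⟩ ⟨hτ1.le, le_refl t1⟩ hτ1.le
    exact absurd (le_trans this hstar.2) (not_le.2 hcon)
  -- existence lemma
  have exist : ∀ c, Q < c → ∃ t0, 0 ≤ t0 ∧ g t0 ≤ c := by
    intro c hc
    by_contra hcon
    push_neg at hcon
    have hge : ∀ t, 0 ≤ t → c < g t := fun t ht => hcon t ht
    have hc0 : c < g 0 := hge 0 le_rfl
    -- trajectory stays in A
    have hbd : ∀ t, 0 ≤ t → g t ≤ g 0 := by
      intro t ht
      rcases eq_or_lt_of_le ht with rfl | ht'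
      · exact le_rfl
      · exact mono 0 t le_rfl (fun s hs => lt_trans hc (hge s hs.1.le))
          ⟨le_refl _, ht⟩ ⟨ht, le_refl _⟩ ht
    set A : Set (EuclideanSpace ℝ (Fin d)) := {y | W y ≤ g 0 ∧ c ≤ W y} with hAdef
    have hAc : IsCompact A := (hproper (g 0)).of_isClosed_subset
      ((isClosed_le hWc continuous_const).inter (isClosed_le continuous_const hWc))
      (fun y hy => hy.1)
    have hAne : A.Nonempty := ⟨x 0, le_rfl, hc0.le⟩
    obtain ⟨y0, hy0A, hmax⟩ := hAc.exists_isMaxOn hAne hphi.continuousOn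
    set δ : ℝ := -(fderiv ℝ W y0 (F y0)) with hδdef
    have hδpos : 0 < δ := by
      have := hstrict y0 (lt_of_lt_of_le hc hy0A.2)
      linarith
    have hmemA : ∀ t, 0 ≤ t → x t ∈ A := fun t ht => ⟨hbd t ht, (hge t ht).le⟩
    -- quantitative decrease
    have hdec : ∀ T, 0 < T → g T + δ * T ≤ g 0 := by
      intro T hT
      have hfc : ContinuousOn (fun t : ℝ => g t + δ * t) (Set.Icc 0 T) :=
        (gcont.mono (fun s hs => hs.1)).add ((continuous_const.mul continuous_id).continuousOn)
      have hanti : AntitoneOn (fun t => g t + δ * t) (Set.Icc 0 T) := by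
        apply antitoneOn_of_deriv_nonpos (convex_Icc 0 T) hfc
        · intro s hs
          rw [interior_Icc] at hs
          exact (((hg s hs.1.le).add ((hasDerivAt_id s).const_mul δ)).differentiableAt).differentiableWithinAt
        · intro s hs
          rw [interior_Icc] at hs
          have hds : HasDerivAt (fun t => g t + δ * t) (fderiv ℝ W (x s) (F (x s)) + δ * 1) s :=
            (hg s hs.1.le).add ((hasDerivAt_id s).const_mul δ)
          rw [hds.deriv]
          have hle : fderiv ℝ W (x s) (F (x s)) ≤ -δ := by
            have h5 := hmax (hmemA s hs.1.le)
            simp only [Set.mem_setOf_eq] at h5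
            rw [hδdef, neg_neg]
            exact h5
          linarith
      have := hanti (Set.left_mem_Icc.2 hT.le) ⟨hT.le, le_refl T⟩ hT.le
      simpa using this
    set T : ℝ := (g 0 - c) / δ + 1 with hTdef
    have hTpos : 0 < T := by
      have : 0 < (g 0 - c) / δ := div_pos (by linarith) hδpos
      rw [hTdef]; linarith
    have h1 := hdec T hTpos
    have h2 : δ * T = (g 0 - c) + δ := by
      have h := div_mul_cancel₀ (g 0 - c) (ne_of_gt hδpos)
      calc δ * T = (g 0 - c) / δ * δ + δ := by rw [hTdef]; ring
        _ = (g 0 - c) + δ := by rw [h]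
    have h3 := hge T hTpos.le
    linarith
  -- neighborhood lemma
  have nbhd : ∀ r : ℝ, 0 < r → ∃ ε > 0, ∀ y, W y ≤ Q + ε →
      Metric.infDist y {y | W y ≤ Q} < r := by
    intro r hr
    by_contra hcon
    push_neg at hcon
    set C : ℕ → Set (EuclideanSpace ℝ (Fin d)) :=
      fun n => {y | W y ≤ Q + 1 / (n + 1) ∧ r ≤ Metric.infDist y {y | W y ≤ Q}} with hCdef
    have hCcl : ∀ n, IsClosed (C n) :=
      fun n => (isClosed_le hWc continuous_const).inter
        (isClosed_le continuous_const (Metric.continuous_infDist_pt _))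
    have hCc : ∀ n, IsCompact (C n) := fun n =>
      (hproper (Q + 1)).of_isClosed_subset (hCcl n)
        (fun y hy => le_trans hy.1 (by
          have : (1 : ℝ) / (n + 1) ≤ 1 := by
            rw [div_le_one (by positivity)]
            linarith [Nat.cast_nonneg (α := ℝ) n]
          linarith))
    have hCne : ∀ n, (C n).Nonempty := by
      intro n
      obtain ⟨y, hy1, hy2⟩ := hcon (1 / (n + 1)) (by positivity)
      exact ⟨y, hy1, hy2⟩
    have hCanti : ∀ m n, m ≤ n → C n ⊆ C m := by
      intro m n hmn y hy
      refine ⟨le_trans hy.1 ?_, hy.2⟩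
      have : (1 : ℝ) / (n + 1) ≤ 1 / (m + 1) := by
        apply one_div_le_one_div_of_le (by positivity)
        have h : (m : ℝ) ≤ n := Nat.cast_le.2 hmn
        linarith
      linarith
    have hdir : Directed (· ⊇ ·) C := fun m n =>
      ⟨max m n, hCanti m _ (le_max_left m n), hCanti n _ (le_max_right m n)⟩
    obtain ⟨z, hz⟩ := IsCompact.nonempty_iInter_of_directed_nonempty_isCompact_isClosed
      C hdir hCne hCc hCcl
    simp only [Set.mem_iInter] at hz
    have hzQ : W z ≤ Q := by
      apply le_of_forall_pos_le_add
      intro ε hε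
      obtain ⟨n, hn⟩ := exists_nat_one_div_lt hε
      have := (hz n).1
      linarith
    have hz0 : Metric.infDist z {y | W y ≤ Q} = 0 := Metric.infDist_zero_of_mem hzQ
    have := (hz 0).2
    rw [hz0] at this
    linarith
  -- assemble
  rw [Metric.tendsto_atTop]
  intro r hr
  obtain ⟨ε, hε, hball⟩ := nbhd r hr
  obtain ⟨t0, ht0, hgt0⟩ := exist (Q + ε) (by linarith)
  refine ⟨t0, fun t ht => ?_⟩
  have h1 : g t ≤ Q + ε := trap (Q + ε) (by linarith) t0 ht0 hgt0 t ht
  have h2 := hball (x t) h1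
  rw [Real.dist_eq, sub_zero, abs_of_nonneg Metric.infDist_nonneg]
  exact h2
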